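/- arXiv:1706.01160 — 2 statements merged into one kernel-verified Lean document; each statement's English description precedes it below -/
import Mathlib

section
/- For a Hermitian positive semidefinite matrix $A$ and diagonal matrices $M' \succeq M \succ 0$ (entrywise $\mu_i' \ge \mu_i > 0$), we have $\det(I + M'^{1/2} A M'^{1/2}) \ge \det(I + M^{1/2} A M^{1/2})$. -/
set_option maxHeartbeats 1000000

open Matrix ComplexOrder
open scoped MatrixOrder

/-- For PSD `Z`, `1 ≤ det (1 + Z)` (in the complex order). -/
lemma aux_one_le_det_one_add {m : ℕ} {Z : Matrix (Fin m) (Fin m) ℂ}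
    (hZ : Z.PosSemidef) : (1 : ℂ) ≤ ((1 : Matrix (Fin m) (Fin m) ℂ) + Z).det := by
  have h := hZ.isHermitian
  set U : Matrix (Fin m) (Fin m) ℂ := (h.eigenvectorUnitary : Matrix (Fin m) (Fin m) ℂ) with hUdef
  set Dg : Matrix (Fin m) (Fin m) ℂ := Matrix.diagonal (RCLike.ofReal ∘ h.eigenvalues) with hDg
  have hU : U * star U = 1 := Matrix.mem_unitaryGroup_iff.mp h.eigenvectorUnitary.2
  have key : ((1 : Matrix (Fin m) (Fin m) ℂ) + Z).det =
      ((1 : Matrix (Fin m) (Fin m) ℂ) + Dg).det := by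
    have hZeq : Z = U * Dg * star U := h.spectral_theorem
    have hsum : (1 : Matrix (Fin m) (Fin m) ℂ) + Z =
        U * ((1 : Matrix (Fin m) (Fin m) ℂ) + Dg) * star U := by
      rw [hZeq, Matrix.mul_add, Matrix.add_mul, Matrix.mul_one, hU]
    rw [hsum, Matrix.det_mul_right_comm, hU, Matrix.one_mul]
  rw [key]
  have hdiag : (1 : Matrix (Fin m) (Fin m) ℂ) + Dg =
      Matrix.diagonal (fun i => 1 + (h.eigenvalues i : ℂ)) := by
    rw [hDg, ← Matrix.diagonal_one, Matrix.diagonal_add]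
    rfl
  rw [hdiag, Matrix.det_diagonal]
  calc (1 : ℂ) = ∏ _i : Fin m, (1 : ℂ) := by simp
    _ ≤ ∏ i, (1 + (h.eigenvalues i : ℂ)) := by
        apply Finset.prod_le_prod
        · intro i _; exact zero_le_one
        · intro i _
          have := hZ.eigenvalues_nonneg i
          rw [← Complex.ofReal_one, ← Complex.ofReal_add, Complex.real_le_real]
          linarith

/-- Loewner determinant monotonicity: if `X` is PSD and `Y - X` is PSD then
`det (1 + X) ≤ det (1 + Y)`. -/
lemma aux_det_mono {m : ℕ} {X Y : Matrix (Fin m) (Fin m) ℂ}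
    (hX : X.PosSemidef) (hP : (Y - X).PosSemidef) :
    ((1 : Matrix (Fin m) (Fin m) ℂ) + X).det ≤ ((1 : Matrix (Fin m) (Fin m) ℂ) + Y).det := by
  have hOX : ((1 : Matrix (Fin m) (Fin m) ℂ) + X).PosDef :=
    Matrix.PosDef.add_posSemidef Matrix.PosDef.one hX
  set S := CFC.sqrt ((1 : Matrix (Fin m) (Fin m) ℂ) + X) with hSdef
  have hSpsd : S.PosSemidef := (CFC.sqrt_nonneg _).posSemidef
  have hSS : S * S = 1 + X := CFC.sqrt_mul_sqrt_self _ hOX.posSemidef.nonneg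
  have hdet : S.det * S.det = ((1 : Matrix (Fin m) (Fin m) ℂ) + X).det := by
    rw [← Matrix.det_mul, hSS]
  have hdetX : (0 : ℂ) < ((1 : Matrix (Fin m) (Fin m) ℂ) + X).det := hOX.det_pos
  have hSdet : IsUnit S.det := by
    apply isUnit_iff_ne_zero.mpr
    intro h0
    rw [h0, mul_zero] at hdet
    exact hdetX.ne hdet
  have hSinv : S * S⁻¹ = 1 := Matrix.mul_nonsing_inv S hSdet
  have hSinv' : S⁻¹ * S = 1 := Matrix.nonsing_inv_mul S hSdet
  set Z := S⁻¹ * (Y - X) * S⁻¹ with hZdef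
  have hZpsd : Z.PosSemidef := by
    have h2 : Z = (S⁻¹)ᴴ * (Y - X) * S⁻¹ := by
      rw [hZdef, (hSpsd.isHermitian.inv).eq]
    rw [h2]
    exact hP.conjTranspose_mul_mul_same _
  have key : (1 : Matrix (Fin m) (Fin m) ℂ) + Y = S * (1 + Z) * S := by
    rw [Matrix.mul_add, Matrix.add_mul, Matrix.mul_one, hSS, hZdef]
    rw [show S * (S⁻¹ * (Y - X) * S⁻¹) * S
        = (S * S⁻¹) * (Y - X) * (S⁻¹ * S) by noncomm_ring]
    rw [hSinv, hSinv', Matrix.one_mul, Matrix.mul_one]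
    abel
  rw [key, Matrix.det_mul, Matrix.det_mul]
  calc ((1 : Matrix (Fin m) (Fin m) ℂ) + X).det
      = ((1 : Matrix (Fin m) (Fin m) ℂ) + X).det * 1 := (mul_one _).symm
    _ ≤ ((1 : Matrix (Fin m) (Fin m) ℂ) + X).det * (1 + Z).det :=
        mul_le_mul_of_nonneg_left (aux_one_le_det_one_add hZpsd) hdetX.le
    _ = S.det * (1 + Z).det * S.det := by rw [← hdet]; ring

/-- Determinant monotonicity lemma: for Hermitian PSD `A` and diagonal matrices
`M' ⪰ M ≻ 0` (entrywise `0 < μ i ≤ μ' i`),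
`det(I + M'^{1/2} A M'^{1/2}) ≥ det(I + M^{1/2} A M^{1/2})`.
Both determinants are real and positive, so we compare real parts. -/
theorem stmt_4 (n : ℕ) (A : Matrix (Fin n) (Fin n) ℂ) (hA : A.PosSemidef)
    (μ μ' : Fin n → ℝ) (hμ : ∀ i, 0 < μ i) (hle : ∀ i, μ i ≤ μ' i) :
    ((1 + Matrix.diagonal (fun i => ((Real.sqrt (μ' i) : ℝ) : ℂ)) * A *
        Matrix.diagonal (fun i => ((Real.sqrt (μ' i) : ℝ) : ℂ))).det).re ≥
    ((1 + Matrix.diagonal (fun i => ((Real.sqrt (μ i) : ℝ) : ℂ)) * A *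
        Matrix.diagonal (fun i => ((Real.sqrt (μ i) : ℝ) : ℂ))).det).re := by
  have hμ' : ∀ i, 0 < μ' i := fun i => lt_of_lt_of_le (hμ i) (hle i)
  set D : Matrix (Fin n) (Fin n) ℂ :=
    Matrix.diagonal (fun i => ((Real.sqrt (μ i) : ℝ) : ℂ)) with hD
  set D' : Matrix (Fin n) (Fin n) ℂ :=
    Matrix.diagonal (fun i => ((Real.sqrt (μ' i) : ℝ) : ℂ)) with hD'
  set c : Fin n → ℝ := fun i => Real.sqrt (μ i) / Real.sqrt (μ' i) with hc
  set C : Matrix (Fin n) (Fin n) ℂ := Matrix.diagonal (fun i => ((c i : ℝ) : ℂ)) with hC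
  have hc_pos : ∀ i, 0 < c i := fun i =>
    div_pos (Real.sqrt_pos.mpr (hμ i)) (Real.sqrt_pos.mpr (hμ' i))
  have hc_le : ∀ i, c i ≤ 1 := fun i =>
    (div_le_one (Real.sqrt_pos.mpr (hμ' i))).mpr (Real.sqrt_le_sqrt (hle i))
  -- D = C * D'
  have hCD : D = C * D' := by
    rw [hD, hC, hD', Matrix.diagonal_mul_diagonal]
    refine congrArg Matrix.diagonal (funext fun i => ?_)
    rw [← Complex.ofReal_mul]
    congr 1
    exact (div_mul_cancel₀ _ (ne_of_gt (Real.sqrt_pos.mpr (hμ' i)))).symm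
  have hcomm : C * D' = D' * C := by
    rw [hC, hD', Matrix.diagonal_mul_diagonal, Matrix.diagonal_mul_diagonal]
    exact congrArg Matrix.diagonal (funext fun i => mul_comm _ _)
  -- B = D' A D' is PSD
  have hD'H : D'ᴴ = D' := by
    rw [hD', Matrix.diagonal_conjTranspose]
    refine congrArg Matrix.diagonal (funext fun i => ?_)
    simp [Pi.star_apply, Complex.star_def, Complex.conj_ofReal]
  set B : Matrix (Fin n) (Fin n) ℂ := D' * A * D' with hB
  have hBpsd : B.PosSemidef := by
    have := hA.conjTranspose_mul_mul_same D'
    rwa [hD'H, ← hB] at this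
  obtain ⟨hRpsd, hRR⟩ : ∃ h : (CFC.sqrt B).PosSemidef, CFC.sqrt B * CFC.sqrt B = B :=
    ⟨(CFC.sqrt_nonneg _).posSemidef, CFC.sqrt_mul_sqrt_self _ hBpsd.nonneg⟩
  set R := CFC.sqrt B with hR
  clear_value R
  -- D A D = (C R) (R C)
  have step1 : D * A * D = C * (D' * A * (C * D')) := by
    rw [hCD]; noncomm_ring
  have step2 : D' * A * (C * D') = D' * A * (D' * C) := by rw [hcomm]
  have hDAD : D * A * D = (C * R) * (R * C) := by
    rw [step1, step2, show D' * A * (D' * C) = (D' * A * D') * C from by noncomm_ring,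
      ← hB, ← hRR]
    noncomm_ring
  -- Weinstein–Aronszajn
  have hWA : ((1 : Matrix (Fin n) (Fin n) ℂ) + D * A * D).det
      = ((1 : Matrix (Fin n) (Fin n) ℂ) + R * (C * C) * R).det := by
    rw [hDAD, Matrix.det_one_add_mul_comm]
    congr 2
    noncomm_ring
  -- X := R C² R is PSD, B - X is PSD
  have hCCpsd : (C * C).PosSemidef := by
    rw [hC, Matrix.diagonal_mul_diagonal]
    apply Matrix.PosSemidef.diagonal
    intro i
    simp only [Pi.zero_apply, ← Complex.ofReal_mul, Complex.zero_le_real]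
    positivity
  have hRH : Rᴴ = R := hRpsd.isHermitian.eq
  have hXpsd : (R * (C * C) * R).PosSemidef := by
    have := hCCpsd.conjTranspose_mul_mul_same R
    rwa [hRH] at this
  have hsub : (B - R * (C * C) * R).PosSemidef := by
    have heq : B - R * (C * C) * R = R * ((1 : Matrix (Fin n) (Fin n) ℂ) - C * C) * R := by
      rw [← hRR]; noncomm_ring
    have h1 : (1 : Matrix (Fin n) (Fin n) ℂ) - C * C =
        Matrix.diagonal (fun i => ((1 - c i * c i : ℝ) : ℂ)) := by
      rw [hC, Matrix.diagonal_mul_diagonal, ← Matrix.diagonal_one, Matrix.diagonal_sub]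
      refine congrArg Matrix.diagonal (funext fun i => ?_)
      push_cast
      ring
    have hdpsd : ((1 : Matrix (Fin n) (Fin n) ℂ) - C * C).PosSemidef := by
      rw [h1]
      apply Matrix.PosSemidef.diagonal
      intro i
      simp only [Pi.zero_apply, Complex.zero_le_real]
      nlinarith [hc_le i, hc_pos i]
    have := hdpsd.conjTranspose_mul_mul_same R
    rwa [hRH, ← heq] at this
  -- conclude in ℂ then take real parts
  have hmain : ((1 : Matrix (Fin n) (Fin n) ℂ) + D * A * D).det
      ≤ ((1 : Matrix (Fin n) (Fin n) ℂ) + D' * A * D').det := by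
    rw [hWA]
    have := aux_det_mono hXpsd hsub
    rwa [hB] at this
  exact (Complex.le_def.mp hmain).1
end

section
/- Consider a single FIFO queue with $q$ input links, each carrying packets with inter-arrival time at least $qC$ on each link, where the output transmission time per packet is $C$. Then at most $q$ packets can be present simultaneously in the queue at any time (one per link), and consequently the queuing delay of any packet is at most $(q-1)C$. -/
/-- FIFO queue with `q` input links: packets are indexed by `(link, sequence
number)`, arrive with inter-arrival time at least `q*C` on each link, and are
served FIFO by a single work-conserving server with service time `C`.  Every
packet waits at most `(q-1)*C`. -/
theorem stmt_8 (q : ℕ) (hq : 1 ≤ q) (C : ℝ) (hC : 0 < C)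
    (a : Fin q → ℕ → ℝ)                 -- arrival times on each link
    (start : Fin q → ℕ → ℝ)             -- service start times
    -- inter-arrival time on each link at least q*C
    (hgap : ∀ ℓ k, a ℓ k + (q : ℝ) * C ≤ a ℓ (k + 1))
    -- a packet cannot start service before it arrives
    (harr : ∀ ℓ k, a ℓ k ≤ start ℓ k)
    -- FIFO order: an earlier arrival starts service no later
    (hfifo : ∀ ℓ k ℓ' k', a ℓ k < a ℓ' k' → start ℓ k ≤ start ℓ' k')
    -- single server: service intervals of distinct packets do not overlap
    (hserial : ∀ ℓ k ℓ' k', (ℓ, k) ≠ (ℓ', k') →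
      start ℓ k + C ≤ start ℓ' k' ∨ start ℓ' k' + C ≤ start ℓ k)
    -- work conservation: while a packet waits, the server is busy
    (hbusy : ∀ ℓ k, ∀ t : ℝ, a ℓ k ≤ t → t < start ℓ k →
      ∃ ℓ' k', start ℓ' k' ≤ t ∧ t < start ℓ' k' + C) :
    ∀ ℓ k, start ℓ k - a ℓ k ≤ ((q : ℝ) - 1) * C := by
  have hq0 : (0:ℝ) < (q:ℝ) := by exact_mod_cast hq
  have hqC : 0 < (q:ℝ) * C := mul_pos hq0 hC
  -- arrivals on a link are at least q*C apart
  have hmono : ∀ (ℓ : Fin q) (m n : ℕ), m < n → a ℓ m + (q:ℝ)*C ≤ a ℓ n := by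
    intro ℓ m n hmn
    induction n with
    | zero => omega
    | succ n ih =>
      rcases Nat.lt_succ_iff_lt_or_eq.mp hmn with h | h
      · have h1 := ih h
        have h2 := hgap ℓ n
        linarith
      · subst h; exact hgap ℓ m
  -- key step: a violating packet yields another violating packet arriving q*C earlier
  have hV : ∀ (ℓ : Fin q) (k : ℕ), ((q:ℝ)-1)*C < start ℓ k - a ℓ k →
      ∃ ℓ' k', ((q:ℝ)-1)*C < start ℓ' k' - a ℓ' k' ∧ a ℓ' k' ≤ a ℓ k - (q:ℝ)*C := by
    intro ℓ k hv
    have ht : ∀ j : Fin q, a ℓ k ≤ a ℓ k + (j:ℝ)*C ∧ a ℓ k + (j:ℝ)*C < start ℓ k := by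
      intro j
      have hj0 : (0:ℝ) ≤ (j:ℝ) := by positivity
      have hj1 : ((j:ℕ):ℝ) + 1 ≤ (q:ℝ) := by exact_mod_cast j.2
      constructor
      · nlinarith
      · nlinarith
    choose L K hs1 hs2 using fun j : Fin q =>
      hbusy ℓ k (a ℓ k + (j:ℝ)*C) (ht j).1 (ht j).2
    -- every busy packet arrived no later than a ℓ k (FIFO)
    have hle : ∀ j : Fin q, a (L j) (K j) ≤ a ℓ k := by
      intro j
      by_contra h
      push_neg at h
      have := hfifo ℓ k (L j) (K j) h
      have h1 := hs1 j
      have h2 := (ht j).2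
      linarith
    -- every busy packet started after a ℓ k - C
    have hgt : ∀ j : Fin q, a ℓ k - C < start (L j) (K j) := by
      intro j
      have h2 := hs2 j
      have hj0 : (0:ℝ) ≤ (j:ℝ)*C := by positivity
      linarith
    have key2 : ∀ (g : Fin q) (k₁ k₂ : ℕ), k₁ < k₂ → a g k₂ ≤ a ℓ k →
        a ℓ k - C < start g k₁ →
        ∃ ℓ' k', ((q:ℝ)-1)*C < start ℓ' k' - a ℓ' k' ∧ a ℓ' k' ≤ a ℓ k - (q:ℝ)*C := by
      intro g k₁ k₂ h12 hk2 hst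
      have hm := hmono g k₁ k₂ h12
      exact ⟨g, k₁, by linarith, by linarith⟩
    by_cases hinj : Function.Injective L
    · -- L injective hence surjective: some busy packet is on link ℓ
      have hsurj : Function.Surjective L := Finite.injective_iff_surjective.mp hinj
      obtain ⟨j, hjℓ⟩ := hsurj ℓ
      have h1 := hs1 j
      have h2 := hs2 j
      have h3 := hle j
      rw [hjℓ] at h1 h2 h3
      have hj0 : (0:ℝ) ≤ (j:ℝ)*C := by positivity
      rcases lt_trichotomy (K j) k with h | h | h
      · exact key2 ℓ (K j) k h le_rfl (by linarith)
      · subst h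
        have := (ht j).2
        exfalso; linarith
      · have := hmono ℓ k (K j) h
        exfalso; linarith
    · -- two busy packets on the same link
      rw [Function.not_injective_iff] at hinj
      obtain ⟨i, j, hLij, hij⟩ := hinj
      rcases lt_trichotomy (K i) (K j) with h | h | h
      · exact key2 (L i) (K i) (K j) h (by rw [hLij]; exact hle j) (hgt i)
      · -- same packet serving at two times C apart: impossible
        exfalso
        have e1 := hs1 i
        have e2 := hs2 i
        have e3 := hs1 j
        have e4 := hs2 j
        rw [hLij, h] at e1 e2
        have hji : ((j:ℕ):ℝ) * C < ((i:ℕ) + 1 : ℝ) * C := by push_cast; linarith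
        have hij' : ((i:ℕ):ℝ) * C < ((j:ℕ) + 1 : ℝ) * C := by push_cast; linarith
        have h1 : ((j:ℕ):ℝ) < ((i:ℕ) + 1 : ℝ) := (mul_lt_mul_iff_left₀ hC).mp hji
        have h2' : ((i:ℕ):ℝ) < ((j:ℕ) + 1 : ℝ) := (mul_lt_mul_iff_left₀ hC).mp hij'
        have h1' : (j:ℕ) < (i:ℕ) + 1 := by exact_mod_cast h1
        have h2'' : (i:ℕ) < (j:ℕ) + 1 := by exact_mod_cast h2'
        exact hij (Fin.ext (by omega))
      · exact key2 (L j) (K j) (K i) h (by rw [← hLij]; exact hle i) (hgt j)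
  -- now the descent argument
  intro ℓ k
  by_contra hcon
  push_neg at hcon
  have hm : ∀ (ℓ' : Fin q) (k' : ℕ), a ℓ' 0 ≤ a ℓ' k' := by
    intro ℓ' k'
    cases k' with
    | zero => exact le_rfl
    | succ n =>
      have := hmono ℓ' 0 (n+1) (Nat.succ_pos n)
      linarith
  have hne : (Finset.univ : Finset (Fin q)).Nonempty := ⟨ℓ, Finset.mem_univ ℓ⟩
  set m := Finset.univ.inf' hne (fun ℓ' => a ℓ' 0) with hmdef
  have hmle : ∀ (ℓ' : Fin q) (k' : ℕ), m ≤ a ℓ' k' := fun ℓ' k' =>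
    le_trans (Finset.inf'_le _ (Finset.mem_univ ℓ')) (hm ℓ' k')
  have chain : ∀ n : ℕ, ∃ ℓ' k', ((q:ℝ)-1)*C < start ℓ' k' - a ℓ' k' ∧
      a ℓ' k' ≤ a ℓ k - (n:ℝ) * ((q:ℝ)*C) := by
    intro n
    induction n with
    | zero => exact ⟨ℓ, k, hcon, by simp⟩
    | succ n ih =>
      obtain ⟨ℓ', k', h1, h2⟩ := ih
      obtain ⟨ℓ'', k'', h3, h4⟩ := hV ℓ' k' h1
      exact ⟨ℓ'', k'', h3, by push_cast; linarith⟩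
  obtain ⟨n, hn⟩ := exists_nat_gt ((a ℓ k - m) / ((q:ℝ)*C))
  obtain ⟨ℓ', k', _, h2⟩ := chain n
  have h3 := hmle ℓ' k'
  rw [div_lt_iff₀ hqC] at hn
  linarith
end
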